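/- Let Λ be a finite connected 3-regular simple graph admitting a subgroup A ≤ Aut(Λ) that acts sharply transitively on the arcs of Λ, and suppose d := dim_{F_2} E_1(Λ) ≥ 2. Then the lexicographic product Γ = Λ[K̄_2] admits a subgroup G ≤ Aut(Γ) acting transitively on the arcs of Γ such that every vertex-stabiliser G_v has order 3·2^{d−1} and the local action G_v^{Γ(v)} is permutation isomorphic to A_4(6). -/

import Mathlib

/-- A permutation `g` of the vertex set is an automorphism of the graph `Γ`. -/
def IsGraphAut {V : Type*} (Γ : SimpleGraph V) (g : Equiv.Perm V) : Prop :=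
  ∀ u v : V, Γ.Adj (g u) (g v) ↔ Γ.Adj u v

/-- The subgroup `G` acts transitively on the arcs of `Γ`. -/
def ArcTransitiveOn {V : Type*} (Γ : SimpleGraph V) (G : Subgroup (Equiv.Perm V)) : Prop :=
  ∀ u v u' v' : V, Γ.Adj u v → Γ.Adj u' v' → ∃ g ∈ G, g u = u' ∧ g v = v'

/-- `G` acts sharply transitively (transitively and freely) on the arcs of `Γ`. -/
def SharplyArcTransitiveOn {V : Type*} (Γ : SimpleGraph V)
    (G : Subgroup (Equiv.Perm V)) : Prop :=
  ∀ u v u' v' : V, Γ.Adj u v → Γ.Adj u' v' →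
    ∃! g : G, (g : Equiv.Perm V) u = u' ∧ (g : Equiv.Perm V) v = v'

/-- `G` acts sharply transitively (transitively and freely) on the 2-arcs of `Γ`. -/
def SharplyTwoArcTransitiveOn {V : Type*} (Γ : SimpleGraph V)
    (G : Subgroup (Equiv.Perm V)) : Prop :=
  ∀ u v w u' v' w' : V, Γ.Adj u v → Γ.Adj v w → u ≠ w →
    Γ.Adj u' v' → Γ.Adj v' w' → u' ≠ w' →
      ∃! g : G, (g : Equiv.Perm V) u = u' ∧ (g : Equiv.Perm V) v = v' ∧
        (g : Equiv.Perm V) w = w'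

/-- The local action of `G` at `v`: the set of permutations of the neighbourhood of `v`
induced by elements of the vertex-stabiliser of `v` in `G`. -/
def localActionSet {V : Type*} (Γ : SimpleGraph V) (G : Subgroup (Equiv.Perm V)) (v : V) :
    Set (Equiv.Perm (Γ.neighborSet v)) :=
  {p | ∃ g ∈ G, g v = v ∧ ∀ u : Γ.neighborSet v, (p u : V) = g (u : V)}

/-- Permutation isomorphism between a set of permutations of `Ω` and a set of
permutations of `Δ`: a bijection `e : Ω ≃ Δ` conjugating the first set onto the second. -/
def PermIsomorphic {Ω Δ : Type*} (P : Set (Equiv.Perm Ω)) (Q : Set (Equiv.Perm Δ)) : Prop :=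
  ∃ e : Ω ≃ Δ, ∀ q : Equiv.Perm Δ, q ∈ Q ↔ ∃ p ∈ P, ∀ ω : Ω, e (p ω) = q (e ω)

open scoped Classical in
/-- The 1-eigenspace of the adjacency matrix of `Λ` over `F₂`. -/
noncomputable def eigOne {V : Type*} [Fintype V] (Λ : SimpleGraph V) :
    Submodule (ZMod 2) (V → ZMod 2) :=
  LinearMap.ker (Matrix.toLin' (Λ.adjMatrix (ZMod 2)) - LinearMap.id)

/-- The lexicographic product `Λ[K̄₂]`: vertex set `V(Λ) × F₂`, with `(u,i)` adjacent to
`(v,j)` iff `u` is adjacent to `v` in `Λ`. -/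
def lexK2 {V : Type*} (Λ : SimpleGraph V) : SimpleGraph (V × ZMod 2) where
  Adj p q := Λ.Adj p.1 q.1
  symm := ⟨fun _ _ h => SimpleGraph.Adj.symm h⟩
  loopless := ⟨fun p h => Λ.ne_of_adj h rfl⟩

/-- The double transposition `(1 2)(3 4)` (0-indexed: `(0 1)(2 3)`). -/
def doubleTransposition : Equiv.Perm (Fin 4) := Equiv.swap 0 1 * Equiv.swap 2 3

/-- The subgroup `⟨(1 2)(3 4)⟩` of `Alt(4)`. -/
def Halt : Subgroup (alternatingGroup (Fin 4)) :=
  Subgroup.zpowers ⟨doubleTransposition, by rw [Equiv.Perm.mem_alternatingGroup]; decide⟩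

/-- `A₄(6)`: the image of `Alt(4)` in the symmetric group on the 6 left cosets of
`⟨(1 2)(3 4)⟩`, under the left multiplication action. -/
def A46 : Subgroup (Equiv.Perm (alternatingGroup (Fin 4) ⧸ Halt)) :=
  (MulAction.toPermHom (alternatingGroup (Fin 4)) (alternatingGroup (Fin 4) ⧸ Halt)).range

namespace S11

open Fin.NatCast

/-! ### The `A₄` side -/

def cc : alternatingGroup (Fin 4) :=
  ⟨Equiv.swap 0 1 * Equiv.swap 1 2, by rw [Equiv.Perm.mem_alternatingGroup]; decide⟩
def dt4 : alternatingGroup (Fin 4) :=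
  ⟨doubleTransposition, by rw [Equiv.Perm.mem_alternatingGroup]; decide⟩
def tt2 : alternatingGroup (Fin 4) :=
  ⟨Equiv.swap 0 2 * Equiv.swap 1 3, by rw [Equiv.Perm.mem_alternatingGroup]; decide⟩

def uu : Fin 4 → alternatingGroup (Fin 4) :=
  ![1, dt4, ⟨Equiv.swap 0 3 * Equiv.swap 1 2, by rw [Equiv.Perm.mem_alternatingGroup]; decide⟩,
    tt2]

def pats : Fin 4 → Fin 3 → ZMod 2 := ![![0,0,0], ![0,1,1], ![1,0,1], ![1,1,0]]

abbrev Δ4 := alternatingGroup (Fin 4) ⧸ Halt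

def em (m : Fin 3) (j : ZMod 2) : Δ4 := QuotientGroup.mk (cc ^ (m : ℕ) * tt2 ^ (j.val))

lemma dt4_mem : dt4 ∈ Halt := Subgroup.mem_zpowers _

lemma dt4_sq : dt4 * dt4 = 1 := by decide

lemma mkEq {a b : alternatingGroup (Fin 4)} (h : a⁻¹ * b = 1 ∨ a⁻¹ * b = dt4) :
    (QuotientGroup.mk a : Δ4) = QuotientGroup.mk b := by
  refine QuotientGroup.eq.mpr ?_
  rcases h with h | h <;> rw [h]
  · exact Subgroup.one_mem _
  · exact dt4_mem

lemma mem_Halt_iff (s : alternatingGroup (Fin 4)) : s ∈ Halt ↔ s = 1 ∨ s = dt4 := by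
  constructor
  · rintro ⟨k, rfl⟩
    show dt4 ^ k = 1 ∨ dt4 ^ k = dt4
    rcases Int.even_or_odd k with ⟨m, rfl⟩ | ⟨m, rfl⟩
    · left
      have h2 : m + m = 2 * m := by ring
      rw [h2, zpow_mul, show dt4 ^ (2 : ℤ) = 1 by
        rw [show (2 : ℤ) = ((2 : ℕ) : ℤ) from rfl, zpow_natCast, pow_two, dt4_sq], one_zpow]
    · right
      rw [zpow_add, zpow_one, zpow_mul, show dt4 ^ (2 : ℤ) = 1 by
        rw [show (2 : ℤ) = ((2 : ℕ) : ℤ) from rfl, zpow_natCast, pow_two, dt4_sq], one_zpow,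
        one_mul]
  · rintro (rfl | rfl)
    · exact Subgroup.one_mem _
    · exact dt4_mem

lemma em_inj : ∀ (m m' : Fin 3) (j j' : ZMod 2), em m j = em m' j' → (m, j) = (m', j') := by
  have key : ∀ (m m' : Fin 3) (j j' : ZMod 2),
      ((cc ^ (m : ℕ) * tt2 ^ j.val)⁻¹ * (cc ^ (m' : ℕ) * tt2 ^ j'.val) = 1 ∨
       (cc ^ (m : ℕ) * tt2 ^ j.val)⁻¹ * (cc ^ (m' : ℕ) * tt2 ^ j'.val) = dt4) →
      (m, j) = (m', j') := by decide
  intro m m' j j' h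
  exact key m m' j j' ((mem_Halt_iff _).mp (QuotientGroup.eq.mp h))

lemma smul_em (t : Fin 4) (m : Fin 3) (j : ZMod 2) :
    uu t • em m j = em m (j + pats t m) := by
  show QuotientGroup.mk (uu t * (cc ^ (m : ℕ) * tt2 ^ j.val)) = _
  exact mkEq (by revert t m j; decide)

lemma smul_em_c (m : Fin 3) (j : ZMod 2) : cc • em m j = em (m + 1) j := by
  show QuotientGroup.mk (cc * (cc ^ (m : ℕ) * tt2 ^ j.val)) = _
  exact mkEq (by revert m j; decide)

lemma smul_em_cpow (n : ℕ) (m : Fin 3) (j : ZMod 2) :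
    (cc ^ n) • em m j = em (m + (n : Fin 3)) j := by
  induction n generalizing m with
  | zero => rw [pow_zero, one_smul, Nat.cast_zero, add_zero]
  | succ n ih =>
    rw [pow_succ, mul_smul, smul_em_c, ih, Nat.cast_add, Nat.cast_one]
    congr 1
    abel

lemma act_core (k : Fin 3) (t : Fin 4) (m : Fin 3) (j : ZMod 2) :
    (cc ^ (k : ℕ) * uu t) • em m j = em (m + k) (j + pats t m) := by
  rw [mul_smul, smul_em, smul_em_cpow, Fin.cast_val_eq_self]

lemma decomp : ∀ s : alternatingGroup (Fin 4), ∃ (k : Fin 3) (t : Fin 4),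
    s = cc ^ (k : ℕ) * uu t := by decide

lemma emSurj : ∀ s : alternatingGroup (Fin 4), ∃ (m : Fin 3) (j : ZMod 2),
    ((cc ^ (m : ℕ) * tt2 ^ j.val)⁻¹ * s = 1 ∨ (cc ^ (m : ℕ) * tt2 ^ j.val)⁻¹ * s = dt4) := by
  decide

lemma hcases4 : ∀ ρ : Fin 3 → ZMod 2, ρ 0 + ρ 1 + ρ 2 = 0 →
    ∃ t : Fin 4, ∀ m, ρ m = pats t m := by decide

lemma zmod2_cases : ∀ z : ZMod 2, z = 0 ∨ z = 1 := by decide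

lemma zmod2_add_self (z w : ZMod 2) : z + w + w = z := by revert z w; decide

lemma zmod2_self_add (z : ZMod 2) : z + z = 0 := by revert z; decide

/-! ### The graph side -/

section Graph

variable {V : Type*} [Fintype V]

open scoped Classical in
lemma mem_eigOne_iff (Λ : SimpleGraph V) (x : V → ZMod 2) :
    x ∈ eigOne Λ ↔ ∀ v, ∑ u ∈ Λ.neighborFinset v, x u = x v := by
  unfold eigOne
  rw [LinearMap.mem_ker, LinearMap.sub_apply, LinearMap.id_apply, sub_eq_zero,
    Matrix.toLin'_apply, funext_iff]
  refine forall_congr' fun v => ?_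
  rw [SimpleGraph.adjMatrix_mulVec_apply]

lemma comp_mem_eigOne {Λ : SimpleGraph V} {σ : Equiv.Perm V} (hσ : IsGraphAut Λ σ)
    {x : V → ZMod 2} (hx : x ∈ eigOne Λ) : (fun v => x (σ v)) ∈ eigOne Λ := by
  classical
  rw [mem_eigOne_iff] at hx ⊢
  intro v
  have key : ∑ u ∈ Λ.neighborFinset v, x (σ u) = ∑ u ∈ Λ.neighborFinset (σ v), x u := by
    refine Finset.sum_nbij' (fun u => σ u) (fun u => σ.symm u) ?_ ?_ ?_ ?_ ?_
    · intro a ha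
      rw [SimpleGraph.mem_neighborFinset] at ha ⊢
      exact (hσ v a).mpr ha
    · intro a ha
      rw [SimpleGraph.mem_neighborFinset] at ha ⊢
      refine (hσ v (σ.symm a)).mp ?_
      rw [Equiv.apply_symm_apply]
      exact ha
    · intro a _; exact σ.symm_apply_apply a
    · intro a _; exact σ.apply_symm_apply a
    · intro a _; rfl
  exact key.trans (hx (σ v))

set_option linter.unusedSectionVars false

/-- The basic automorphism of `Λ[K̄₂]` built from `a : Perm V` and `x : V → F₂`. -/
def gperm (a : Equiv.Perm V) (x : V → ZMod 2) : Equiv.Perm (V × ZMod 2) where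
  toFun p := (a p.1, p.2 + x p.1)
  invFun q := (a.symm q.1, q.2 + x (a.symm q.1))
  left_inv p := by
    obtain ⟨w, j⟩ := p
    simp [zmod2_add_self]
  right_inv q := by
    obtain ⟨w, j⟩ := q
    simp [zmod2_add_self]

lemma gperm_apply (a : Equiv.Perm V) (x : V → ZMod 2) (p : V × ZMod 2) :
    gperm a x p = (a p.1, p.2 + x p.1) := rfl

lemma gperm_one : gperm (1 : Equiv.Perm V) (0 : V → ZMod 2) = 1 := by
  apply Equiv.ext
  intro p
  show ((1 : Equiv.Perm V) p.1, p.2 + 0) = p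
  simp

lemma gperm_mul (a b : Equiv.Perm V) (x y : V → ZMod 2) :
    gperm a x * gperm b y = gperm (a * b) (fun v => y v + x (b v)) := by
  apply Equiv.ext
  intro p
  show gperm a x (gperm b y p) = _
  simp only [gperm_apply, Equiv.Perm.coe_mul, Function.comp_apply]
  exact congrArg _ (add_assoc _ _ _)

lemma gperm_inv (a : Equiv.Perm V) (x : V → ZMod 2) :
    (gperm a x)⁻¹ = gperm a⁻¹ (fun v => x (a⁻¹ v)) := by
  apply inv_eq_of_mul_eq_one_right
  rw [gperm_mul]
  have h1 : (fun v => x ((a⁻¹ : Equiv.Perm V) v) + x ((a⁻¹ : Equiv.Perm V) v))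
      = (0 : V → ZMod 2) := funext fun v => zmod2_self_add _
  rw [h1, mul_inv_cancel, gperm_one]

lemma gperm_data_inj {a b : Equiv.Perm V} {x y : V → ZMod 2}
    (h : gperm a x = gperm b y) : a = b ∧ x = y := by
  constructor
  · apply Equiv.ext
    intro w
    have := congrArg (fun g => (g (w, (0 : ZMod 2))).1) h
    exact this
  · funext w
    have h2 : ((gperm a x) (w, (0 : ZMod 2))).2 = ((gperm b y) (w, (0 : ZMod 2))).2 := by rw [h]
    rw [gperm_apply, gperm_apply] at h2
    simpa using h2

lemma gperm_aut {Λ : SimpleGraph V} {a : Equiv.Perm V} {x : V → ZMod 2}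
    (ha : IsGraphAut Λ a) : IsGraphAut (lexK2 Λ) (gperm a x) :=
  fun p q => ha p.1 q.1

variable (Λ : SimpleGraph V) (A : Subgroup (Equiv.Perm V))

/-- The arc-transitive subgroup of `Aut(Λ[K̄₂])`. -/
def bigG (hAaut : ∀ g ∈ A, IsGraphAut Λ g) : Subgroup (Equiv.Perm (V × ZMod 2)) where
  carrier := {g | ∃ a ∈ A, ∃ x ∈ eigOne Λ, g = gperm a x}
  one_mem' := ⟨1, A.one_mem, 0, (eigOne Λ).zero_mem, gperm_one.symm⟩
  mul_mem' := by
    rintro g h ⟨a, ha, x, hx, rfl⟩ ⟨b, hb, y, hy, rfl⟩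
    refine ⟨a * b, A.mul_mem ha hb, (fun v => y v + x (b v)), ?_, gperm_mul a b x y⟩
    exact (eigOne Λ).add_mem hy (comp_mem_eigOne (hAaut b hb) hx)
  inv_mem' := by
    rintro g ⟨a, ha, x, hx, rfl⟩
    exact ⟨a⁻¹, A.inv_mem ha, fun v => x (a⁻¹ v),
      comp_mem_eigOne (hAaut a⁻¹ (A.inv_mem ha)) hx, gperm_inv a x⟩

lemma mem_bigG (hAaut : ∀ g ∈ A, IsGraphAut Λ g) (g : Equiv.Perm (V × ZMod 2)) :
    g ∈ bigG Λ A hAaut ↔ ∃ a ∈ A, ∃ x ∈ eigOne Λ, g = gperm a x := Iff.rfl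

end Graph

/-! ### The per-vertex statement -/

section Main

variable {V : Type*} [Fintype V] {Λ : SimpleGraph V} {A : Subgroup (Equiv.Perm V)}

set_option maxHeartbeats 1000000 in
lemma mainAt (hAaut : ∀ g ∈ A, IsGraphAut Λ g) (hAt : SharplyArcTransitiveOn Λ A)
    (htriv : ∀ a ∈ A, ∀ u w : V, Λ.Adj u w → a u = u → a w = w → a = 1)
    (hW : ∀ u w : V, Λ.Adj u w → ∀ ε η : ZMod 2, ∃ x ∈ eigOne Λ, x u = ε ∧ x w = η)
    (hd : 2 ≤ Module.finrank (ZMod 2) (eigOne Λ))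
    (v : V) (i : ZMod 2) (w1 w2 w3 : V) (a0 : Equiv.Perm V)
    (hNv : ∀ w, Λ.Adj v w ↔ w = w1 ∨ w = w2 ∨ w = w3)
    (hcard3 : Nat.card (Λ.neighborSet v) = 3)
    (h12 : w1 ≠ w2) (h13 : w1 ≠ w3) (h23 : w2 ≠ w3)
    (ha0A : a0 ∈ A) (ha0v : a0 v = v)
    (ha01 : a0 w1 = w2) (ha02 : a0 w2 = w3) (ha03 : a0 w3 = w1) :
    Nat.card ↥(bigG Λ A hAaut ⊓ MulAction.stabilizer (Equiv.Perm (V × ZMod 2)) (v, i)) =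
        3 * 2 ^ (Module.finrank (ZMod 2) (eigOne Λ) - 1) ∧
    PermIsomorphic (localActionSet (lexK2 Λ) (bigG Λ A hAaut) (v, i))
      ((A46 : Subgroup _) : Set (Equiv.Perm (alternatingGroup (Fin 4) ⧸ Halt))) := by
  classical
  have hadj1 : Λ.Adj v w1 := (hNv w1).mpr (Or.inl rfl)
  have hadj2 : Λ.Adj v w2 := (hNv w2).mpr (Or.inr (Or.inl rfl))
  have hadj3 : Λ.Adj v w3 := (hNv w3).mpr (Or.inr (Or.inr rfl))
  have hm3 : ∀ m : Fin 3, m = 0 ∨ m = 1 ∨ m = 2 := by decide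
  set wf : Fin 3 → V := fun m => if m = 0 then w1 else if m = 1 then w2 else w3 with hwfdef
  have hwf0 : wf 0 = w1 := by simp [hwfdef]
  have hwf1 : wf 1 = w2 := by simp [hwfdef]
  have hwf2 : wf 2 = w3 := by simp [hwfdef]
  set idx : V → Fin 3 := fun w => if w = w1 then 0 else if w = w2 then 1 else 2 with hidxdef
  have hidx0 : idx w1 = 0 := by simp [hidxdef]
  have hidx1 : idx w2 = 1 := by simp [hidxdef, Ne.symm h12]
  have hidx2 : idx w3 = 2 := by simp [hidxdef, Ne.symm h13, Ne.symm h23]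
  have hwf_adj : ∀ m, Λ.Adj v (wf m) := by
    intro m; rcases hm3 m with rfl | rfl | rfl
    · rw [hwf0]; exact hadj1
    · rw [hwf1]; exact hadj2
    · rw [hwf2]; exact hadj3
  have hidxwf : ∀ m, idx (wf m) = m := by
    intro m; rcases hm3 m with rfl | rfl | rfl
    · rw [hwf0, hidx0]
    · rw [hwf1, hidx1]
    · rw [hwf2, hidx2]
  have hwfidx : ∀ w, Λ.Adj v w → wf (idx w) = w := by
    intro w hw
    rcases (hNv w).mp hw with rfl | rfl | rfl
    · rw [hidx0, hwf0]
    · rw [hidx1, hwf1]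
    · rw [hidx2, hwf2]
  have ha0wf : ∀ m, a0 (wf m) = wf (m + 1) := by
    intro m; rcases hm3 m with rfl | rfl | rfl
    · rw [hwf0, show (0 + 1 : Fin 3) = 1 by decide, hwf1]; exact ha01
    · rw [hwf1, show (1 + 1 : Fin 3) = 2 by decide, hwf2]; exact ha02
    · rw [hwf2, show (2 + 1 : Fin 3) = 0 by decide, hwf0]; exact ha03
  have ha0pow : ∀ (k : ℕ) (m : Fin 3), (a0 ^ k) (wf m) = wf (m + (k : Fin 3)) := by
    intro k
    induction k with
    | zero => intro m; simp
    | succ n ih =>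
      intro m
      rw [pow_succ, Equiv.Perm.mul_apply, ha0wf, ih, Nat.cast_add, Nat.cast_one]
      congr 1
      abel
  have ha0powv : ∀ k : ℕ, (a0 ^ k) v = v := by
    intro k
    induction k with
    | zero => simp
    | succ n ih => rw [pow_succ, Equiv.Perm.mul_apply, ha0v, ih]
  -- even-pattern lemma
  have hsum : ∀ x, x ∈ eigOne Λ → x v = 0 → x w1 + x w2 + x w3 = 0 := by
    intro x hx hxv
    have h := (mem_eigOne_iff Λ x).mp hx v
    have hNfin : Λ.neighborFinset v = {w1, w2, w3} := by
      ext u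
      simp only [SimpleGraph.mem_neighborFinset, Finset.mem_insert, Finset.mem_singleton]
      exact hNv u
    rw [hNfin, Finset.sum_insert (by simp [h12, h13]),
      Finset.sum_insert (by simp [h23]), Finset.sum_singleton, hxv, ← add_assoc] at h
    exact h
  -- realization of all even patterns
  have hpat : ∀ t : Fin 4, ∃ x, x ∈ eigOne Λ ∧ x v = 0 ∧ ∀ m : Fin 3, x (wf m) = pats t m := by
    obtain ⟨x1, hx1E, hx1v, hx1w1⟩ := hW v w1 hadj1 0 1
    have hy2E : (fun w => x1 (a0 w)) ∈ eigOne Λ := comp_mem_eigOne (hAaut a0 ha0A) hx1E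
    have hy3E : (fun w => x1 (a0 (a0 w))) ∈ eigOne Λ := comp_mem_eigOne (hAaut a0 ha0A) hy2E
    have ht4 : ∀ t : Fin 4, t = 0 ∨ t = 1 ∨ t = 2 ∨ t = 3 := by decide
    rcases zmod2_cases (x1 w2) with hδ | hδ
    · -- x1 w2 = 0, x1 w3 = 1
      have hθ : x1 w3 = 1 := by
        have h := hsum x1 hx1E hx1v
        rw [hx1w1, hδ] at h
        rcases zmod2_cases (x1 w3) with h' | h'
        · rw [h'] at h; exact absurd h (by decide)
        · exact h'
      intro t
      rcases ht4 t with rfl | rfl | rfl | rfl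
      · refine ⟨0, (eigOne Λ).zero_mem, rfl, ?_⟩
        intro m; rcases hm3 m with rfl | rfl | rfl <;> rfl
      · refine ⟨(fun w => x1 (a0 w)), hy2E, ?_, ?_⟩
        · show x1 (a0 v) = 0
          rw [ha0v, hx1v]
        · intro m; rcases hm3 m with rfl | rfl | rfl
          · show x1 (a0 (wf 0)) = pats 1 0
            rw [hwf0, ha01, hδ]; decide
          · show x1 (a0 (wf 1)) = pats 1 1
            rw [hwf1, ha02, hθ]; decide
          · show x1 (a0 (wf 2)) = pats 1 2
            rw [hwf2, ha03, hx1w1]; decide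
      · refine ⟨x1, hx1E, hx1v, ?_⟩
        intro m; rcases hm3 m with rfl | rfl | rfl
        · rw [hwf0, hx1w1]; decide
        · rw [hwf1, hδ]; decide
        · rw [hwf2, hθ]; decide
      · refine ⟨(fun w => x1 (a0 (a0 w))), hy3E, ?_, ?_⟩
        · show x1 (a0 (a0 v)) = 0
          rw [ha0v, ha0v, hx1v]
        · intro m; rcases hm3 m with rfl | rfl | rfl
          · show x1 (a0 (a0 (wf 0))) = pats 3 0
            rw [hwf0, ha01, ha02, hθ]; decide
          · show x1 (a0 (a0 (wf 1))) = pats 3 1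
            rw [hwf1, ha02, ha03, hx1w1]; decide
          · show x1 (a0 (a0 (wf 2))) = pats 3 2
            rw [hwf2, ha03, ha01, hδ]; decide
    · -- x1 w2 = 1, x1 w3 = 0
      have hθ : x1 w3 = 0 := by
        have h := hsum x1 hx1E hx1v
        rw [hx1w1, hδ] at h
        rcases zmod2_cases (x1 w3) with h' | h'
        · exact h'
        · rw [h'] at h; exact absurd h (by decide)
      intro t
      rcases ht4 t with rfl | rfl | rfl | rfl
      · refine ⟨0, (eigOne Λ).zero_mem, rfl, ?_⟩
        intro m; rcases hm3 m with rfl | rfl | rfl <;> rfl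
      · refine ⟨(fun w => x1 (a0 (a0 w))), hy3E, ?_, ?_⟩
        · show x1 (a0 (a0 v)) = 0
          rw [ha0v, ha0v, hx1v]
        · intro m; rcases hm3 m with rfl | rfl | rfl
          · show x1 (a0 (a0 (wf 0))) = pats 1 0
            rw [hwf0, ha01, ha02, hθ]; decide
          · show x1 (a0 (a0 (wf 1))) = pats 1 1
            rw [hwf1, ha02, ha03, hx1w1]; decide
          · show x1 (a0 (a0 (wf 2))) = pats 1 2
            rw [hwf2, ha03, ha01, hδ]; decide
      · refine ⟨(fun w => x1 (a0 w)), hy2E, ?_, ?_⟩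
        · show x1 (a0 v) = 0
          rw [ha0v, hx1v]
        · intro m; rcases hm3 m with rfl | rfl | rfl
          · show x1 (a0 (wf 0)) = pats 2 0
            rw [hwf0, ha01, hδ]; decide
          · show x1 (a0 (wf 1)) = pats 2 1
            rw [hwf1, ha02, hθ]; decide
          · show x1 (a0 (wf 2)) = pats 2 2
            rw [hwf2, ha03, hx1w1]; decide
      · refine ⟨x1, hx1E, hx1v, ?_⟩
        intro m; rcases hm3 m with rfl | rfl | rfl
        · rw [hwf0, hx1w1]; decide
        · rw [hwf1, hδ]; decide
        · rw [hwf2, hθ]; decide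
  constructor
  · -- cardinality of the vertex stabiliser
    set ev : eigOne Λ →ₗ[ZMod 2] ZMod 2 :=
      (LinearMap.proj v).comp (eigOne Λ).subtype with hevdef
    have hmem : ∀ (a : ↥(A ⊓ MulAction.stabilizer (Equiv.Perm V) v)) (x : ↥(LinearMap.ker ev)),
        gperm (a : Equiv.Perm V) (((x : eigOne Λ) : V → ZMod 2))
          ∈ bigG Λ A hAaut ⊓ MulAction.stabilizer (Equiv.Perm (V × ZMod 2)) (v, i) := by
      intro a x
      obtain ⟨haA, hav⟩ := Subgroup.mem_inf.mp a.2
      have hav' : (a : Equiv.Perm V) v = v := MulAction.mem_stabilizer_iff.mp hav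
      have hxv' : ((x : eigOne Λ) : V → ZMod 2) v = 0 := LinearMap.mem_ker.mp x.2
      refine Subgroup.mem_inf.mpr ⟨⟨_, haA, _, (x : eigOne Λ).2, rfl⟩, ?_⟩
      rw [MulAction.mem_stabilizer_iff]
      show gperm (a : Equiv.Perm V) (((x : eigOne Λ) : V → ZMod 2)) (v, i) = (v, i)
      rw [gperm_apply, hav', hxv', add_zero]
    set Φ : (↥(A ⊓ MulAction.stabilizer (Equiv.Perm V) v) × ↥(LinearMap.ker ev)) →
        ↥(bigG Λ A hAaut ⊓ MulAction.stabilizer (Equiv.Perm (V × ZMod 2)) (v, i)) :=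
      fun az => ⟨gperm (az.1 : Equiv.Perm V) ((az.2 : eigOne Λ) : V → ZMod 2),
        hmem az.1 az.2⟩ with hΦdef
    have hΦbij : Function.Bijective Φ := by
      constructor
      · rintro ⟨a, x⟩ ⟨a', x'⟩ h
        have h' := Subtype.ext_iff.mp h
        obtain ⟨h1, h2⟩ := gperm_data_inj h'
        have hxx : (x : eigOne Λ) = (x' : eigOne Λ) := Subtype.ext h2
        have : x = x' := Subtype.ext hxx
        rw [Prod.mk.injEq]
        exact ⟨Subtype.ext h1, this⟩
      · rintro ⟨g, hg⟩
        obtain ⟨hgG, hgst⟩ := Subgroup.mem_inf.mp hg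
        obtain ⟨a, haA, x, hxE, rfl⟩ := hgG
        have hfix : gperm a x (v, i) = (v, i) := MulAction.mem_stabilizer_iff.mp hgst
        rw [gperm_apply] at hfix
        have hav : a v = v := congrArg Prod.fst hfix
        have hxv : x v = 0 := by
          have h2 := congrArg Prod.snd hfix
          have h3 : i + x v = i + 0 := by rw [add_zero]; exact h2
          exact add_left_cancel h3
        refine ⟨(⟨a, Subgroup.mem_inf.mpr ⟨haA, ?_⟩⟩, ⟨⟨x, hxE⟩, ?_⟩), rfl⟩
        · rw [MulAction.mem_stabilizer_iff]; exact hav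
        · rw [LinearMap.mem_ker]; exact hxv
    have hc1 := Nat.card_congr (Equiv.ofBijective Φ hΦbij)
    rw [Nat.card_prod] at hc1
    rw [← hc1]
    -- card of the vertex stabiliser in A is 3
    have hAv3 : Nat.card ↥(A ⊓ MulAction.stabilizer (Equiv.Perm V) v) = 3 := by
      have hmemN : ∀ a : ↥(A ⊓ MulAction.stabilizer (Equiv.Perm V) v),
          ((a : Equiv.Perm V) w1) ∈ Λ.neighborSet v := by
        intro a
        obtain ⟨haA, hav⟩ := Subgroup.mem_inf.mp a.2
        have hav' : (a : Equiv.Perm V) v = v := MulAction.mem_stabilizer_iff.mp hav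
        have h := (hAaut _ haA v w1).mpr hadj1
        rw [hav'] at h
        exact h
      have hΨbij : Function.Bijective
          (fun a : ↥(A ⊓ MulAction.stabilizer (Equiv.Perm V) v) =>
            (⟨(a : Equiv.Perm V) w1, hmemN a⟩ : ↥(Λ.neighborSet v))) := by
        constructor
        · intro a a' h
          have h1 : (a : Equiv.Perm V) w1 = (a' : Equiv.Perm V) w1 := Subtype.ext_iff.mp h
          obtain ⟨haA, hav⟩ := Subgroup.mem_inf.mp a.2
          obtain ⟨haA', hav'⟩ := Subgroup.mem_inf.mp a'.2
          have hav2 : (a : Equiv.Perm V) v = v := MulAction.mem_stabilizer_iff.mp hav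
          have hav2' : (a' : Equiv.Perm V) v = v := MulAction.mem_stabilizer_iff.mp hav'
          have hkey : (a' : Equiv.Perm V)⁻¹ * (a : Equiv.Perm V) = 1 := by
            refine htriv _ (A.mul_mem (A.inv_mem haA') haA) v w1 hadj1 ?_ ?_
            · rw [Equiv.Perm.mul_apply, hav2]
              have h5 : (a' : Equiv.Perm V)⁻¹ ((a' : Equiv.Perm V) v) = v :=
                by simp
              rwa [hav2'] at h5
            · rw [Equiv.Perm.mul_apply, h1]
              simp
          have h6 : (a' : Equiv.Perm V) * ((a' : Equiv.Perm V)⁻¹ * (a : Equiv.Perm V))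
              = (a' : Equiv.Perm V) * 1 := by rw [hkey]
          rw [← mul_assoc, mul_inv_cancel, one_mul, mul_one] at h6
          exact Subtype.ext h6
        · rintro ⟨w, hw⟩
          obtain ⟨g, ⟨hg1, hg2⟩, _⟩ := hAt v w1 v w hadj1 hw
          refine ⟨⟨(g : Equiv.Perm V), Subgroup.mem_inf.mpr ⟨g.2, ?_⟩⟩, ?_⟩
          · rw [MulAction.mem_stabilizer_iff]; exact hg1
          · exact Subtype.ext hg2
      rw [Nat.card_congr (Equiv.ofBijective _ hΨbij), hcard3]
    rw [hAv3]
    -- card of the kernel is 2^(d-1)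
    have hsurj : Function.Surjective ev := by
      intro c
      obtain ⟨y, hyE, hyv1, _⟩ := hW v w1 hadj1 1 0
      refine ⟨c • ⟨y, hyE⟩, ?_⟩
      have h0 : ev ⟨y, hyE⟩ = y v := rfl
      rw [map_smul, h0, hyv1, smul_eq_mul, mul_one]
    have hrk : Module.finrank (ZMod 2) ↥(LinearMap.ker ev)
        = Module.finrank (ZMod 2) ↥(eigOne Λ) - 1 := by
      have h1 := LinearMap.finrank_range_add_finrank_ker ev
      rw [LinearMap.range_eq_top.mpr hsurj, finrank_top, Module.finrank_self] at h1
      omega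
    have hcardK : Nat.card ↥(LinearMap.ker ev)
        = 2 ^ (Module.finrank (ZMod 2) ↥(eigOne Λ) - 1) := by
      haveI : Fintype ↥(LinearMap.ker ev) := Fintype.ofFinite _
      rw [Nat.card_eq_fintype_card,
        Module.card_eq_pow_finrank (K := ZMod 2) (V := ↥(LinearMap.ker ev)), hrk, ZMod.card]
    rw [hcardK]
  · -- the local action
    have hwf_memN : ∀ (m : Fin 3) (j : ZMod 2),
        ((wf m, j) : V × ZMod 2) ∈ (lexK2 Λ).neighborSet (v, i) := fun m j => hwf_adj m
    let eΩ : ↥((lexK2 Λ).neighborSet (v, i)) ≃ (Fin 3 × ZMod 2) :=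
      { toFun := fun ω => (idx (ω : V × ZMod 2).1, (ω : V × ZMod 2).2)
        invFun := fun q => ⟨(wf q.1, q.2), hwf_memN q.1 q.2⟩
        left_inv := by
          rintro ⟨⟨w, j⟩, h⟩
          have hadj : Λ.Adj v w := h
          apply Subtype.ext
          show ((wf (idx w), j) : V × ZMod 2) = (w, j)
          rw [hwfidx w hadj]
        right_inv := by
          rintro ⟨m, j⟩
          show (idx (wf m), j) = (m, j)
          rw [hidxwf] }
    have heQbij : Function.Bijective (fun q : Fin 3 × ZMod 2 => em q.1 q.2) := by
      constructor
      · rintro ⟨m, j⟩ ⟨m', j'⟩ h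
        exact em_inj m m' j j' h
      · intro δ
        refine QuotientGroup.induction_on δ ?_
        intro s
        obtain ⟨m, j, h⟩ := emSurj s
        exact ⟨(m, j), mkEq h⟩
    set e : ↥((lexK2 Λ).neighborSet (v, i)) ≃ Δ4 :=
      eΩ.trans (Equiv.ofBijective _ heQbij) with hedef
    have he : ∀ ω : ↥((lexK2 Λ).neighborSet (v, i)),
        e ω = em (idx (ω : V × ZMod 2).1) (ω : V × ZMod 2).2 := fun _ => rfl
    refine ⟨e, ?_⟩
    intro q
    constructor
    · -- membership in A₄(6) gives an element of the local action
      intro hq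
      obtain ⟨s, rfl⟩ := hq
      obtain ⟨k, t, rfl⟩ := decomp s
      obtain ⟨x, hxE, hxv, hxp⟩ := hpat t
      have ha0kA : a0 ^ (k : ℕ) ∈ A := pow_mem ha0A _
      have hGmem : gperm (a0 ^ (k : ℕ)) x ∈ bigG Λ A hAaut :=
        ⟨_, ha0kA, x, hxE, rfl⟩
      have hpres : ∀ p : V × ZMod 2,
          p ∈ (lexK2 Λ).neighborSet (v, i) ↔
            gperm (a0 ^ (k : ℕ)) x p ∈ (lexK2 Λ).neighborSet (v, i) := by
        intro p
        show Λ.Adj v p.1 ↔ Λ.Adj v ((a0 ^ (k : ℕ)) p.1)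
        have h2 := hAaut _ ha0kA v p.1
        rw [ha0powv] at h2
        exact h2.symm
      refine ⟨Equiv.Perm.subtypePerm (gperm (a0 ^ (k : ℕ)) x) (fun p => (hpres p).symm), ?_, ?_⟩
      · refine ⟨gperm (a0 ^ (k : ℕ)) x, hGmem, ?_, fun u => rfl⟩
        show ((a0 ^ (k : ℕ)) v, i + x v) = (v, i)
        rw [ha0powv, hxv, add_zero]
      · rintro ⟨⟨w, j⟩, hω⟩
        have hadjw : Λ.Adj v w := hω
        have hL : e (Equiv.Perm.subtypePerm (gperm (a0 ^ (k : ℕ)) x) (fun p => (hpres p).symm) ⟨(w, j), hω⟩)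
            = em (idx ((a0 ^ (k : ℕ)) w)) (j + x w) := rfl
        rw [hL, he]
        show _ = (MulAction.toPermHom (alternatingGroup (Fin 4)) Δ4 (cc ^ (k : ℕ) * uu t))
            (em (idx w) j)
        rw [MulAction.toPermHom_apply, MulAction.toPerm_apply, act_core]
        have h1 : (a0 ^ (k : ℕ)) w = wf (idx w + k) := by
          conv_lhs => rw [← hwfidx w hadjw]
          rw [ha0pow, Fin.cast_val_eq_self]
        have h2 : x w = pats t (idx w) := by
          conv_lhs => rw [← hwfidx w hadjw]
          exact hxp (idx w)
        rw [h1, hidxwf, h2]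
    · -- an element of the local action lies in A₄(6)
      rintro ⟨p, ⟨g, hgG, hgfix, hagree⟩, hpe⟩
      obtain ⟨a, haA, x, hxE, rfl⟩ := hgG
      rw [gperm_apply] at hgfix
      have hav : a v = v := congrArg Prod.fst hgfix
      have hxv : x v = 0 := by
        have h2 := congrArg Prod.snd hgfix
        have h3 : i + x v = i + 0 := by rw [add_zero]; exact h2
        exact add_left_cancel h3
      have haw1 : Λ.Adj v (a w1) := by
        have h := (hAaut a haA v w1).mpr hadj1
        rwa [hav] at h
      have hk : ∃ k : Fin 3, a w1 = wf k := by
        rcases (hNv (a w1)).mp haw1 with h | h | h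
        · exact ⟨0, by rw [h, hwf0]⟩
        · exact ⟨1, by rw [h, hwf1]⟩
        · exact ⟨2, by rw [h, hwf2]⟩
      obtain ⟨k, hk⟩ := hk
      have ha : a = a0 ^ (k : ℕ) := by
        obtain ⟨g0, _, huniq⟩ := hAt v w1 v (wf k) hadj1 (hwf_adj k)
        have e1 := huniq ⟨a, haA⟩ ⟨hav, hk⟩
        have hpw : (a0 ^ (k : ℕ)) w1 = wf k := by
          have h := ha0pow (k : ℕ) 0
          rw [hwf0, Fin.cast_val_eq_self, zero_add] at h
          exact h
        have e2 := huniq ⟨a0 ^ (k : ℕ), pow_mem ha0A _⟩ ⟨ha0powv _, hpw⟩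
        have := e1.trans e2.symm
        exact Subtype.ext_iff.mp this
      have hevn : (fun m => x (wf m)) 0 + (fun m => x (wf m)) 1 + (fun m => x (wf m)) 2 = 0 := by
        show x (wf 0) + x (wf 1) + x (wf 2) = 0
        rw [hwf0, hwf1, hwf2]
        exact hsum x hxE hxv
      obtain ⟨t, ht⟩ := hcases4 (fun m => x (wf m)) hevn
      refine ⟨cc ^ (k : ℕ) * uu t, ?_⟩
      apply Equiv.ext
      intro δ
      obtain ⟨ω, rfl⟩ := e.surjective δ
      obtain ⟨⟨w, j⟩, hω⟩ := ω
      have hadjw : Λ.Adj v w := hω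
      rw [← hpe ⟨(w, j), hω⟩]
      have hup : (p ⟨(w, j), hω⟩ : V × ZMod 2) = ((a0 ^ (k : ℕ)) w, j + x w) := by
        rw [hagree ⟨(w, j), hω⟩, gperm_apply, ha]
      rw [MulAction.toPermHom_apply, MulAction.toPerm_apply, he ⟨(w, j), hω⟩, he (p ⟨(w, j), hω⟩),
        hup]
      show (cc ^ (k : ℕ) * uu t) • em (idx w) j = em (idx ((a0 ^ (k : ℕ)) w)) (j + x w)
      rw [act_core]
      have h1 : (a0 ^ (k : ℕ)) w = wf (idx w + k) := by
        conv_lhs => rw [← hwfidx w hadjw]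
        rw [ha0pow, Fin.cast_val_eq_self]
      have h2 : x w = pats t (idx w) := by
        conv_lhs => rw [← hwfidx w hadjw]
        exact ht (idx w)
      rw [h1, hidxwf, h2]

end Main

end S11

set_option maxHeartbeats 1000000 in
theorem statement11 {V : Type*} [Fintype V] (Λ : SimpleGraph V) (hconn : Λ.Connected)
    (hreg : ∀ v : V, Nat.card (Λ.neighborSet v) = 3)
    (A : Subgroup (Equiv.Perm V)) (hAaut : ∀ g ∈ A, IsGraphAut Λ g)
    (hAt : SharplyArcTransitiveOn Λ A)
    (hd : 2 ≤ Module.finrank (ZMod 2) (eigOne Λ)) :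
    ∃ G : Subgroup (Equiv.Perm (V × ZMod 2)),
      (∀ g ∈ G, IsGraphAut (lexK2 Λ) g) ∧ ArcTransitiveOn (lexK2 Λ) G ∧
      (∀ v : V × ZMod 2,
        Nat.card ↥(G ⊓ MulAction.stabilizer (Equiv.Perm (V × ZMod 2)) v) =
          3 * 2 ^ (Module.finrank (ZMod 2) (eigOne Λ) - 1)) ∧
      (∀ v : V × ZMod 2, PermIsomorphic (localActionSet (lexK2 Λ) G v)
        ((A46 : Subgroup _) : Set (Equiv.Perm (alternatingGroup (Fin 4) ⧸ Halt)))) := by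
  classical
  have htriv : ∀ a ∈ A, ∀ u w : V, Λ.Adj u w → a u = u → a w = w → a = 1 := by
    intro a ha u w hadj h1 h2
    obtain ⟨g, _, huniq⟩ := hAt u w u w hadj hadj
    have e1 := huniq ⟨a, ha⟩ ⟨h1, h2⟩
    have e2 := huniq 1 ⟨rfl, rfl⟩
    have := e1.trans e2.symm
    exact Subtype.ext_iff.mp this
  have hnonempty : ∀ u : V, ∃ w, Λ.Adj u w := by
    intro u
    by_contra hc
    push_neg at hc
    have hemp : Λ.neighborSet u = ∅ := by
      ext w
      simp only [SimpleGraph.mem_neighborSet, Set.mem_empty_iff_false, iff_false]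
      exact fun hh => (hc w).elim hh
    have h0 := hreg u
    rw [hemp] at h0
    simp at h0
  have hvt : ∀ u w : V, ∃ a ∈ A, (a : Equiv.Perm V) u = w := by
    intro u w
    obtain ⟨u', hu'⟩ := hnonempty u
    obtain ⟨w', hw'⟩ := hnonempty w
    obtain ⟨g, ⟨h1, _⟩, _⟩ := hAt u u' w w' hu' hw'
    exact ⟨g, g.2, h1⟩
  have hEx : ∃ x ∈ eigOne Λ, ∃ w : V, x w = 1 := by
    by_contra hc
    push_neg at hc
    have hbot : eigOne Λ = ⊥ := by
      rw [Submodule.eq_bot_iff]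
      intro x hx
      funext w
      rcases S11.zmod2_cases (x w) with h | h
      · exact h
      · exact absurd h (hc x hx w)
    rw [hbot, finrank_bot] at hd
    omega
  have h10 : ∀ u w : V, Λ.Adj u w → ∃ x ∈ eigOne Λ, x u = 1 ∧ x w = 0 := by
    have hnc : ∃ x ∈ eigOne Λ, ∃ u w : V, Λ.Adj u w ∧ x u ≠ x w := by
      by_contra hc
      push_neg at hc
      have v0 : V := hconn.nonempty.some
      have hconst : ∀ x ∈ eigOne Λ, ∀ u : V, x u = x v0 := by
        intro x hx u
        obtain ⟨pth⟩ := hconn.preconnected u v0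
        induction pth with
        | nil => rfl
        | cons hadj q ih => exact (hc x hx _ _ hadj).trans ih
      have hle : eigOne Λ ≤ Submodule.span (ZMod 2) {(fun _ => 1 : V → ZMod 2)} := by
        intro x hx
        refine Submodule.mem_span_singleton.mpr ⟨x v0, ?_⟩
        funext w
        show x v0 * 1 = x w
        rw [mul_one, hconst x hx w]
      have hone : (fun _ => 1 : V → ZMod 2) ≠ 0 := by
        intro hzz
        have := congrFun hzz v0
        exact one_ne_zero this
      have hsp := finrank_span_singleton (K := ZMod 2) hone
      have hmono := Submodule.finrank_mono hle
      rw [hsp] at hmono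
      omega
    obtain ⟨x, hxE, u0, w0, hadj0, hne0⟩ := hnc
    have hsome : ∃ x' ∈ eigOne Λ, ∃ u' w' : V, Λ.Adj u' w' ∧ x' u' = 1 ∧ x' w' = 0 := by
      rcases S11.zmod2_cases (x u0) with h | h
      · rcases S11.zmod2_cases (x w0) with h' | h'
        · exact absurd (h.trans h'.symm) hne0
        · exact ⟨x, hxE, w0, u0, hadj0.symm, h', h⟩
      · rcases S11.zmod2_cases (x w0) with h' | h'
        · exact ⟨x, hxE, u0, w0, hadj0, h, h'⟩
        · exact absurd (h.trans h'.symm) hne0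
    obtain ⟨x', hxE', u', w', hadj', h1', h0'⟩ := hsome
    intro u w hadj
    obtain ⟨g, ⟨hg1, hg2⟩, _⟩ := hAt u w u' w' hadj hadj'
    refine ⟨fun t => x' ((g : Equiv.Perm V) t), S11.comp_mem_eigOne (hAaut _ g.2) hxE', ?_, ?_⟩
    · show x' ((g : Equiv.Perm V) u) = 1
      rw [hg1]; exact h1'
    · show x' ((g : Equiv.Perm V) w) = 0
      rw [hg2]; exact h0'
  have hW : ∀ u w : V, Λ.Adj u w → ∀ ε η : ZMod 2, ∃ x ∈ eigOne Λ, x u = ε ∧ x w = η := by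
    intro u w hadj ε η
    obtain ⟨x1, hx1, hx1u, hx1w⟩ := h10 u w hadj
    obtain ⟨x2, hx2, hx2w, hx2u⟩ := h10 w u hadj.symm
    refine ⟨ε • x1 + η • x2, ?_, ?_, ?_⟩
    · exact (eigOne Λ).add_mem ((eigOne Λ).smul_mem ε hx1) ((eigOne Λ).smul_mem η hx2)
    · show ε • x1 u + η • x2 u = ε
      rw [hx1u, hx2u, smul_eq_mul, smul_eq_mul, mul_one, mul_zero, add_zero]
    · show ε • x1 w + η • x2 w = η
      rw [hx1w, hx2w, smul_eq_mul, smul_eq_mul, mul_zero, mul_one, zero_add]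
  have hver : ∀ v : V, ∃ (w1 w2 w3 : V) (a0 : Equiv.Perm V),
      (∀ w, Λ.Adj v w ↔ w = w1 ∨ w = w2 ∨ w = w3) ∧ w1 ≠ w2 ∧ w1 ≠ w3 ∧ w2 ≠ w3 ∧
      a0 ∈ A ∧ a0 v = v ∧ a0 w1 = w2 ∧ a0 w2 = w3 ∧ a0 w3 = w1 := by
    intro v
    have hcard : (Λ.neighborFinset v).card = 3 := by
      have h1 : Nat.card ↥(Λ.neighborSet v) = Fintype.card ↥(Λ.neighborSet v) :=
        Nat.card_eq_fintype_card
      have h2 : Fintype.card ↥(Λ.neighborSet v) = Λ.degree v :=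
        SimpleGraph.card_neighborSet_eq_degree Λ v
      have h3 : Λ.degree v = (Λ.neighborFinset v).card := rfl
      rw [← h3, ← h2, ← h1]
      exact hreg v
    obtain ⟨b1, b2, b3, h12, h13, h23, hset⟩ := Finset.card_eq_three.mp hcard
    have hNv : ∀ w, Λ.Adj v w ↔ w = b1 ∨ w = b2 ∨ w = b3 := by
      intro w
      rw [← SimpleGraph.mem_neighborFinset, hset]
      simp [Finset.mem_insert]
    have hadj1 : Λ.Adj v b1 := (hNv b1).mpr (Or.inl rfl)
    have hadj2 : Λ.Adj v b2 := (hNv b2).mpr (Or.inr (Or.inl rfl))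
    have hadj3 : Λ.Adj v b3 := (hNv b3).mpr (Or.inr (Or.inr rfl))
    obtain ⟨g, ⟨hg1, hg2⟩, _⟩ := hAt v b1 v b2 hadj1 hadj2
    have ha0A : (g : Equiv.Perm V) ∈ A := g.2
    have ha0ne1 : (g : Equiv.Perm V) ≠ 1 := by
      intro h
      rw [h] at hg2
      exact h12 hg2
    have hmapsN : ∀ w, Λ.Adj v w → Λ.Adj v ((g : Equiv.Perm V) w) := by
      intro w hw
      have h := (hAaut _ ha0A v w).mpr hw
      rwa [hg1] at h
    have hfix : ∀ w, Λ.Adj v w → (g : Equiv.Perm V) w = w → False := by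
      intro w hw hfw
      exact ha0ne1 (htriv _ ha0A v w hw hg1 hfw)
    have hinj : Function.Injective (g : Equiv.Perm V) := (g : Equiv.Perm V).injective
    have h2 : (g : Equiv.Perm V) b2 = b3 := by
      rcases (hNv _).mp (hmapsN b2 hadj2) with h | h | h
      · exfalso
        rcases (hNv _).mp (hmapsN b3 hadj3) with h' | h' | h'
        · exact h23 (hinj (h.trans h'.symm))
        · exact h13 (hinj (hg2.trans h'.symm))
        · exact hfix b3 hadj3 h'
      · exact (hfix b2 hadj2 h).elim
      · exact h
    have h3 : (g : Equiv.Perm V) b3 = b1 := by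
      rcases (hNv _).mp (hmapsN b3 hadj3) with h | h | h
      · exact h
      · exact absurd (hinj (hg2.trans h.symm)) (fun hh => h13 hh)
      · exact (hfix b3 hadj3 h).elim
    exact ⟨b1, b2, b3, (g : Equiv.Perm V), hNv, h12, h13, h23, ha0A, hg1, hg2, h2, h3⟩
  refine ⟨S11.bigG Λ A hAaut, ?_, ?_, ?_, ?_⟩
  · rintro g ⟨a, haA, x, hxE, rfl⟩
    exact S11.gperm_aut (hAaut a haA)
  · rintro p q p' q' hpq hpq'
    obtain ⟨g, ⟨hg1, hg2⟩, _⟩ := hAt p.1 q.1 p'.1 q'.1 hpq hpq'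
    obtain ⟨x, hxE, hxp, hxq⟩ := hW p.1 q.1 hpq (p'.2 - p.2) (q'.2 - q.2)
    refine ⟨S11.gperm (g : Equiv.Perm V) x, ⟨(g : Equiv.Perm V), g.2, x, hxE, rfl⟩, ?_, ?_⟩
    · rw [S11.gperm_apply, hg1, hxp]
      have h4 : p.2 + (p'.2 - p.2) = p'.2 := by ring
      rw [h4]
    · rw [S11.gperm_apply, hg2, hxq]
      have h4 : q.2 + (q'.2 - q.2) = q'.2 := by ring
      rw [h4]
  · rintro ⟨v, i⟩
    obtain ⟨w1, w2, w3, a0, hNv, h12, h13, h23, ha0A, ha0v, ha01, ha02, ha03⟩ := hver v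
    exact (S11.mainAt hAaut hAt htriv hW hd v i w1 w2 w3 a0 hNv (hreg v)
      h12 h13 h23 ha0A ha0v ha01 ha02 ha03).1
  · rintro ⟨v, i⟩
    obtain ⟨w1, w2, w3, a0, hNv, h12, h13, h23, ha0A, ha0v, ha01, ha02, ha03⟩ := hver v
    exact (S11.mainAt hAaut hAt htriv hW hd v i w1 w2 w3 a0 hNv (hreg v)
      h12 h13 h23 ha0A ha0v ha01 ha02 ha03).2
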